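/- Let π = a + b·i ∈ ℤ[i] with 0 < a < b, gcd(a,b) = 1, and p = a² + b² a prime with p ≡ 1 (mod 4), and let 𝔽 = ℤ[i]/(π). Then for every integer n ≥ 2: if n > (p−1)/4 then d_π(n, n−1) = 2; if n = (p−1)/4 then d_π(n, n−1) = 3; and if n < (p−1)/4 then d_π(n, n−1) ≥ 3. -/

import Mathlib

open scoped Classical

noncomputable section

/-- The quotient ring `ℤ[i]/(π)`. -/
abbrev GQuot (pi : GaussianInt) : Type := GaussianInt ⧸ Ideal.span {pi}

/-- The quotient map `ℤ[i] → ℤ[i]/(π)`. -/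
def gmk (pi : GaussianInt) : GaussianInt →+* GQuot pi := Ideal.Quotient.mk (Ideal.span {pi})

/-- Mannheim weight of an element of `ℤ[i]/(π)`:
the minimum of `|x| + |y|` over representatives `x + y·i`. -/
def mWt (pi : GaussianInt) (α : GQuot pi) : ℕ :=
  sInf { w : ℕ | ∃ z : GaussianInt, gmk pi z = α ∧ z.re.natAbs + z.im.natAbs = w }

/-- Mannheim weight of a vector: the sum of the Mannheim weights of its coordinates. -/
def mWtVec (pi : GaussianInt) {n : ℕ} (v : Fin n → GQuot pi) : ℕ := ∑ i, mWt pi (v i)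

/-- Hamming weight of a vector: the number of nonzero coordinates. -/
def hWtVec {n : ℕ} {F : Type*} [Zero F] (v : Fin n → F) : ℕ :=
  Set.ncard { i : Fin n | v i ≠ 0 }

/-- Minimum Mannheim distance of a linear code (minimum Mannheim weight of a
nonzero codeword). -/
def dPiCode (pi : GaussianInt) {n : ℕ} (C : Submodule (GQuot pi) (Fin n → GQuot pi)) : ℕ :=
  sInf { w : ℕ | ∃ c ∈ C, c ≠ 0 ∧ mWtVec pi c = w }

/-- Minimum Hamming distance of a linear code. -/
def dHCode (pi : GaussianInt) {n : ℕ} (C : Submodule (GQuot pi) (Fin n → GQuot pi)) : ℕ :=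
  sInf { w : ℕ | ∃ c ∈ C, c ≠ 0 ∧ hWtVec c = w }

/-- `dPiMax pi n k`: the maximum minimum Mannheim distance over all `[n,k]` codes. -/
def dPiMax (pi : GaussianInt) (n k : ℕ) : ℕ :=
  sSup { d : ℕ | ∃ C : Submodule (GQuot pi) (Fin n → GQuot pi),
    Module.finrank (GQuot pi) C = k ∧ dPiCode pi C = d }

/-- `dHMax pi n k`: the maximum minimum Hamming distance over all `[n,k]` codes. -/
def dHMax (pi : GaussianInt) (n k : ℕ) : ℕ :=
  sSup { d : ℕ | ∃ C : Submodule (GQuot pi) (Fin n → GQuot pi),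
    Module.finrank (GQuot pi) C = k ∧ dHCode pi C = d }

section AUX
open Zsqrtd
set_option synthInstance.maxHeartbeats 1000000 in
lemma prime_pi {pi : GaussianInt} {p : ℕ} (hp : p.Prime) (hN : pi.norm = p) : Prime pi := by
  rw [← irreducible_iff_prime]
  constructor
  · rw [← Zsqrtd.norm_eq_one_iff, hN]
    simp [hp.ne_one]
  · rintro x y rfl
    have hxy : x.norm.natAbs * y.norm.natAbs = p := by
      rw [← Int.natAbs_mul, ← Zsqrtd.norm_mul, hN]; simp
    rcases hp.eq_one_or_self_of_dvd x.norm.natAbs ⟨_, hxy.symm⟩ with h | h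
    · exact Or.inl (Zsqrtd.norm_eq_one_iff.mp h)
    · refine Or.inr (Zsqrtd.norm_eq_one_iff.mp ?_)
      have := hp.pos
      nlinarith [hxy, h]

lemma pi_ne_zero {pi : GaussianInt} {p : ℕ} (hp : p.Prime) (hN : pi.norm = p) : pi ≠ 0 := by
  intro h; rw [h, Zsqrtd.norm_zero] at hN
  exact hp.ne_zero (by exact_mod_cast hN.symm)

lemma max_ideal {pi : GaussianInt} {p : ℕ} (hp : p.Prime) (hN : pi.norm = p) :
    (Ideal.span {pi} : Ideal GaussianInt).IsMaximal :=
  PrincipalIdealRing.isMaximal_of_irreducible (prime_pi hp hN).irreducible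

@[reducible]
def gfield {pi : GaussianInt} {p : ℕ} (hp : p.Prime) (hN : pi.norm = p) : Field (GQuot pi) :=
  @Ideal.Quotient.field _ _ _ (max_ideal hp hN)

lemma gmk_surj (pi : GaussianInt) : Function.Surjective (gmk pi) :=
  Ideal.Quotient.mk_surjective

lemma gmk_eq_zero_iff (pi : GaussianInt) (z : GaussianInt) : gmk pi z = 0 ↔ pi ∣ z := by
  rw [gmk, Ideal.Quotient.eq_zero_iff_mem, Ideal.mem_span_singleton]

lemma pi_norm_cast {pi : GaussianInt} {p : ℕ} (hN : pi.norm = p) :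
    ((pi.re : ZMod p) ^ 2 + (pi.im : ZMod p) ^ 2 = 0) := by
  have : ((pi.norm : ℤ) : ZMod p) = 0 := by rw [hN]; simp
  rw [Zsqrtd.norm] at this
  push_cast at this
  ring_nf
  ring_nf at this
  linear_combination this

lemma exists_root {pi : GaussianInt} {p : ℕ} (hp : p.Prime) (hmod : p % 4 = 1)
    (hN : pi.norm = p) :
    ∃ c : ZMod p, c * c = -1 ∧ (pi.re : ZMod p) + (pi.im : ZMod p) * c = 0 := by
  haveI : Fact p.Prime := ⟨hp⟩
  obtain ⟨y, hy⟩ : IsSquare (-1 : ZMod p) := ZMod.exists_sq_eq_neg_one_iff.mpr (by omega)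
  have hyy : y * y = -1 := hy.symm
  have hprod : ((pi.re : ZMod p) + (pi.im : ZMod p) * y) * ((pi.re : ZMod p) - (pi.im : ZMod p) * y) = 0 := by
    have := pi_norm_cast hN
    linear_combination this - ((pi.im:ZMod p))^2 * hyy
  rcases mul_eq_zero.mp hprod with h | h
  · exact ⟨y, hyy, h⟩
  · exact ⟨-y, by linear_combination hyy, by linear_combination h⟩

/-- The induced map to `ZMod p`. -/
lemma card_gquot {pi : GaussianInt} {p : ℕ} (hp : p.Prime) (hmod : p % 4 = 1)
    (hN : pi.norm = p) : Nonempty (GQuot pi ≃+* ZMod p) := by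
  haveI : Fact p.Prime := ⟨hp⟩
  obtain ⟨c, hc, hroot⟩ := exists_root hp hmod hN
  have hc' : c * c = ((-1 : ℤ) : ZMod p) := by push_cast; exact hc
  set f : GaussianInt →+* ZMod p := Zsqrtd.lift ⟨c, hc'⟩ with hf
  have hfpi : f pi = 0 := by
    rw [hf, Zsqrtd.lift_apply_apply]
    exact hroot
  have hle : Ideal.span {pi} ≤ RingHom.ker f := by
    rw [Ideal.span_le]; intro x hx
    simp only [Set.mem_singleton_iff] at hx
    subst hx; exact hfpi
  set fbar : GQuot pi →+* ZMod p := Ideal.Quotient.lift _ f hle with hfbar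
  letI : Field (GQuot pi) := gfield hp hN
  have hsurj : Function.Surjective fbar := by
    intro x
    obtain ⟨n, rfl⟩ := ZMod.natCast_zmod_surjective (n := p) x
    exact ⟨gmk pi n, by simp [hfbar, gmk]⟩
  have hinj : Function.Injective fbar := fbar.injective
  exact ⟨RingEquiv.ofBijective fbar ⟨hinj, hsurj⟩⟩

lemma mWt_nonempty (pi : GaussianInt) (α : GQuot pi) :
    {w : ℕ | ∃ z : GaussianInt, gmk pi z = α ∧ z.re.natAbs + z.im.natAbs = w}.Nonempty := by
  obtain ⟨z, rfl⟩ := gmk_surj pi α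
  exact ⟨_, z, rfl, rfl⟩

lemma mWt_le {pi : GaussianInt} {z : GaussianInt} {α : GQuot pi} (h : gmk pi z = α) :
    mWt pi α ≤ z.re.natAbs + z.im.natAbs :=
  Nat.sInf_le ⟨z, h, rfl⟩

lemma mWt_spec (pi : GaussianInt) (α : GQuot pi) :
    ∃ z : GaussianInt, gmk pi z = α ∧ z.re.natAbs + z.im.natAbs = mWt pi α :=
  Nat.sInf_mem (mWt_nonempty pi α)

lemma mWt_eq_zero_iff (pi : GaussianInt) (α : GQuot pi) : mWt pi α = 0 ↔ α = 0 := by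
  constructor
  · intro h
    obtain ⟨z, hz, hw⟩ := mWt_spec pi α
    rw [h] at hw
    have hre : z.re = 0 := by have := Int.natAbs_eq_zero.mp (by omega : z.re.natAbs = 0); exact this
    have him : z.im = 0 := by have := Int.natAbs_eq_zero.mp (by omega : z.im.natAbs = 0); exact this
    have : z = 0 := by ext <;> simp [hre, him]
    rw [← hz, this, map_zero]
  · rintro rfl
    have h := mWt_le (map_zero (gmk pi))
    simpa using h

lemma one_le_mWt {pi : GaussianInt} {α : GQuot pi} (h : α ≠ 0) : 1 ≤ mWt pi α := by
  rcases Nat.eq_zero_or_pos (mWt pi α) with h0 | h1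
  · exact absurd ((mWt_eq_zero_iff pi α).mp h0) h
  · exact h1

lemma gmk_ne_zero {pi : GaussianInt} {p : ℕ} (hp : p.Prime) (hN : pi.norm = p)
    {z : GaussianInt} (hz : ¬ ((p : ℤ) ∣ z.norm)) : gmk pi z ≠ 0 := by
  intro h0
  rw [gmk_eq_zero_iff] at h0
  obtain ⟨t, rfl⟩ := h0
  exact hz ⟨t.norm, by rw [Zsqrtd.norm_mul, hN]⟩

lemma gi_mul_ii : ((⟨0,1⟩ : GaussianInt) * ⟨0,1⟩) = -1 := by
  ext <;> simp [Zsqrtd.re_mul, Zsqrtd.im_mul]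

/-- The image of `i` as a unit. -/
def zetaU (pi : GaussianInt) : (GQuot pi)ˣ where
  val := gmk pi ⟨0,1⟩
  inv := - gmk pi ⟨0,1⟩
  val_inv := by rw [mul_neg, ← map_mul, gi_mul_ii]; simp
  inv_val := by rw [neg_mul, ← map_mul, gi_mul_ii]; simp

lemma zetaU_sq (pi : GaussianInt) : (zetaU pi) ^ 2 = -1 := by
  ext
  push_cast [pow_two, zetaU]
  rw [← map_mul, gi_mul_ii]
  simp

lemma zetaU_pow4 (pi : GaussianInt) : (zetaU pi) ^ 4 = 1 := by
  have : (zetaU pi) ^ 4 = ((zetaU pi) ^ 2) ^ 2 := by rw [← pow_mul]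
  rw [this, zetaU_sq]; simp

lemma zetaU_pow_mod (pi : GaussianInt) (s : ℕ) : (zetaU pi) ^ s = (zetaU pi) ^ (s % 4) := by
  conv_lhs => rw [← Nat.div_add_mod s 4, pow_add, pow_mul, zetaU_pow4, one_pow, one_mul]

lemma wt1_class {z : GaussianInt} (h : z.re.natAbs + z.im.natAbs = 1) :
    z = ⟨1,0⟩ ∨ z = ⟨-1,0⟩ ∨ z = ⟨0,1⟩ ∨ z = ⟨0,-1⟩ := by
  have h1 : (z.re.natAbs = 1 ∧ z.im.natAbs = 0) ∨ (z.re.natAbs = 0 ∧ z.im.natAbs = 1) := by omega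
  rcases h1 with ⟨h1, h2⟩ | ⟨h1, h2⟩
  · have h2' : z.im = 0 := Int.natAbs_eq_zero.mp h2
    rcases Int.natAbs_eq_iff.mp h1 with h | h
    · exact Or.inl (by ext <;> simp [h, h2'])
    · exact Or.inr (Or.inl (by ext <;> simp [h, h2']))
  · have h1' : z.re = 0 := Int.natAbs_eq_zero.mp h1
    rcases Int.natAbs_eq_iff.mp h2 with h | h
    · exact Or.inr (Or.inr (Or.inl (by ext <;> simp [h, h1'])))
    · exact Or.inr (Or.inr (Or.inr (by ext <;> simp [h, h1'])))

lemma wt1_iff {pi : GaussianInt} {p : ℕ} (hp : p.Prime) (hN : pi.norm = p)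
    {α : GQuot pi} : mWt pi α = 1 ↔ ∃ s : ℕ, α = ((zetaU pi ^ s : (GQuot pi)ˣ) : GQuot pi) := by
  letI : Field (GQuot pi) := gfield hp hN
  constructor
  · intro h
    obtain ⟨z, hz, hw⟩ := mWt_spec pi α
    rw [h] at hw
    rcases wt1_class hw with rfl | rfl | rfl | rfl
    · exact ⟨0, by rw [← hz]; norm_num; rfl⟩
    · refine ⟨2, ?_⟩
      rw [← hz, zetaU_sq]
      push_cast
      rw [← map_one (gmk pi), ← map_neg]
      rfl
    · exact ⟨1, by rw [← hz, pow_one]; rfl⟩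
    · refine ⟨3, ?_⟩
      rw [← hz, pow_succ, zetaU_sq]
      push_cast
      rw [neg_one_mul, show ((zetaU pi : (GQuot pi)ˣ) : GQuot pi) = gmk pi ⟨0,1⟩ from rfl,
        ← map_neg]
      rfl
  · rintro ⟨s, rfl⟩
    have hne : ((zetaU pi ^ s : (GQuot pi)ˣ) : GQuot pi) ≠ 0 := Units.ne_zero _
    have hle : mWt pi ((zetaU pi ^ s : (GQuot pi)ˣ) : GQuot pi) ≤ 1 := by
      rw [zetaU_pow_mod]
      have h4 : s % 4 < 4 := Nat.mod_lt _ (by norm_num)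
      interval_cases h : s % 4
      · exact mWt_le (z := ⟨1,0⟩) (by norm_num; rfl)
      · exact mWt_le (z := ⟨0,1⟩) (by rw [pow_one]; rfl)
      · refine mWt_le (z := ⟨-1,0⟩) ?_
        rw [zetaU_sq]
        push_cast
        rw [← map_one (gmk pi), ← map_neg]
        rfl
      · refine mWt_le (z := ⟨0,-1⟩) ?_
        rw [pow_succ, zetaU_sq]
        push_cast
        rw [neg_one_mul, show ((zetaU pi : (GQuot pi)ˣ) : GQuot pi) = gmk pi ⟨0,1⟩ from rfl,
          ← map_neg]
        rfl
    exact le_antisymm hle (one_le_mWt hne)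

lemma mWt_zero (pi : GaussianInt) : mWt pi 0 = 0 := (mWt_eq_zero_iff pi 0).mpr rfl

lemma mWtVec_single (pi : GaussianInt) {n : ℕ} (j : Fin n) (x : GQuot pi) :
    mWtVec pi (Pi.single j x) = mWt pi x := by
  rw [mWtVec, Finset.sum_eq_single j]
  · rw [Pi.single_eq_same]
  · intro i _ hij
    rw [Pi.single_eq_of_ne hij, mWt_zero]
  · intro h; exact absurd (Finset.mem_univ j) h

lemma mWtVec_pair (pi : GaussianInt) {n : ℕ} {j k : Fin n} (hjk : j ≠ k)
    (x y : GQuot pi) :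
    mWtVec pi (Pi.single j x + Pi.single k y) = mWt pi x + mWt pi y := by
  have hsplit : ∀ i : Fin n, mWt pi ((Pi.single j x + Pi.single k y : Fin n → GQuot pi) i)
      = (if i = j then mWt pi x else 0) + (if i = k then mWt pi y else 0) := by
    intro i
    by_cases h1 : i = j
    · subst h1
      rw [if_pos rfl, if_neg hjk]
      simp [Pi.single_eq_of_ne, Ne.symm hjk]
    · by_cases h2 : i = k
      · subst h2
        rw [if_neg h1, if_pos rfl]
        simp [Pi.single_eq_of_ne, h1, fun h => h1 h]
      · rw [if_neg h1, if_neg h2]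
        simp [Pi.single_eq_of_ne, h1, h2, mWt_zero]
  rw [mWtVec]
  simp only [hsplit]
  rw [Finset.sum_add_distrib]
  simp [Finset.sum_ite_eq']

/-- The linear functional `c ↦ ∑ j, c j * w j`. -/
def dotL {F : Type*} [CommRing F] {n : ℕ} (w : Fin n → F) : (Fin n → F) →ₗ[F] F where
  toFun c := ∑ j, c j * w j
  map_add' u v := by simp [add_mul, Finset.sum_add_distrib]
  map_smul' r u := by simp [Finset.mul_sum, mul_assoc]

lemma dotL_apply {F : Type*} [CommRing F] {n : ℕ} (w : Fin n → F) (c : Fin n → F) :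
    dotL w c = ∑ j, c j * w j := rfl

lemma dotL_single {F : Type*} [CommRing F] {n : ℕ} (w : Fin n → F) (j : Fin n) (x : F) :
    dotL w (Pi.single j x) = x * w j := by
  rw [dotL_apply, Finset.sum_eq_single j]
  · rw [Pi.single_eq_same]
  · intro i _ hij
    rw [Pi.single_eq_of_ne hij, zero_mul]
  · intro h; exact absurd (Finset.mem_univ j) h

lemma finrank_ker_dotL {F : Type*} [Field F] {n : ℕ} (w : Fin n → F) {j0 : Fin n}
    (hw : w j0 ≠ 0) : Module.finrank F (LinearMap.ker (dotL w)) = n - 1 := by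
  have hsurj : LinearMap.range (dotL w) = ⊤ := by
    rw [LinearMap.range_eq_top]
    intro x
    exact ⟨Pi.single j0 (x * (w j0)⁻¹), by
      rw [dotL_single, mul_assoc, inv_mul_cancel₀ hw, mul_one]⟩
  have h1 := LinearMap.finrank_range_add_finrank_ker (dotL w)
  rw [hsurj, finrank_top, Module.finrank_self, Module.finrank_pi] at h1
  simp only [Fintype.card_fin] at h1
  omega

lemma code_eq_ker {F : Type*} [Field F] {n : ℕ} (hn : 1 ≤ n)
    (C : Submodule F (Fin n → F)) (hC : Module.finrank F C = n - 1) :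
    ∃ w : Fin n → F, C = LinearMap.ker (dotL w) := by
  have hfr : Module.finrank F (Fin n → F) = n := by
    rw [Module.finrank_pi]; simp
  have hq : Module.finrank F ((Fin n → F) ⧸ C) = 1 := by
    have := Submodule.finrank_quotient_add_finrank C
    rw [hfr, hC] at this
    omega
  obtain ⟨ψ⟩ := FiniteDimensional.nonempty_linearEquiv_of_finrank_eq
    (hq.trans (Module.finrank_self F).symm)
  set φ : (Fin n → F) →ₗ[F] F := ψ.toLinearMap ∘ₗ C.mkQ with hφ
  have hker : LinearMap.ker φ = C := by
    rw [hφ, LinearMap.ker_comp, LinearEquiv.ker, Submodule.comap_bot, Submodule.ker_mkQ]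
  refine ⟨fun j => φ (Pi.single j 1), ?_⟩
  have heq : φ = dotL (fun j => φ (Pi.single j 1)) := by
    refine LinearMap.ext fun c => ?_
    rw [dotL_apply, LinearMap.pi_apply_eq_sum_univ φ c]
    simp only [smul_eq_mul]
    refine Finset.sum_congr rfl fun x _ => ?_
    congr 2
    funext j
    rw [Pi.single_apply]
    simp [eq_comm]
  rw [← heq, hker]

lemma p_ge_5 {p : ℕ} (hp : p.Prime) (hmod : p % 4 = 1) : 5 ≤ p := by
  have := hp.two_le
  omega

lemma finite_gquot {pi : GaussianInt} {p : ℕ} (hp : p.Prime) (hmod : p % 4 = 1)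
    (hN : pi.norm = p) : Finite (GQuot pi) := by
  haveI : NeZero p := ⟨hp.ne_zero⟩
  obtain ⟨e⟩ := card_gquot hp hmod hN
  exact Finite.of_equiv _ e.toEquiv.symm

lemma card_units_gquot {pi : GaussianInt} {p : ℕ} (hp : p.Prime) (hmod : p % 4 = 1)
    (hN : pi.norm = p) : Nat.card (GQuot pi)ˣ = p - 1 := by
  haveI : NeZero p := ⟨hp.ne_zero⟩
  haveI : Fact p.Prime := ⟨hp⟩
  obtain ⟨e⟩ := card_gquot hp hmod hN
  have := Nat.card_congr (Units.mapEquiv e.toMulEquiv).toEquiv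
  rw [this]
  rw [Nat.card_eq_fintype_card, ZMod.card_units_eq_totient, Nat.totient_prime hp]

lemma two_ne_zero_gquot {pi : GaussianInt} {p : ℕ} (hp : p.Prime) (hmod : p % 4 = 1)
    (hN : pi.norm = p) : (2 : GQuot pi) ≠ 0 := by
  have h2 : ((2 : GaussianInt)).norm = 4 := by
    simp [Zsqrtd.norm]
  have : ¬ ((p : ℤ) ∣ (2 : GaussianInt).norm) := by
    rw [h2]
    intro hdvd
    have : p ∣ 4 := by exact_mod_cast (Int.natCast_dvd_natCast.mp (by exact_mod_cast hdvd))
    have := Nat.le_of_dvd (by norm_num) this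
    have := p_ge_5 hp hmod
    omega
  have hne := gmk_ne_zero hp hN this
  rwa [show gmk pi (2 : GaussianInt) = (2 : GQuot pi) from map_ofNat _ 2] at hne

lemma fifteen_ne_zero_gquot {pi : GaussianInt} {p : ℕ} (hp : p.Prime) (hmod : p % 4 = 1)
    (hN : pi.norm = p) (hP13 : 13 ≤ p) : (15 : GQuot pi) ≠ 0 := by
  have h2 : ((15 : GaussianInt)).norm = 225 := by
    simp [Zsqrtd.norm]
  have : ¬ ((p : ℤ) ∣ (15 : GaussianInt).norm) := by
    rw [h2]
    intro hdvd
    have h225 : p ∣ 225 := by exact_mod_cast (Int.natCast_dvd_natCast.mp (by exact_mod_cast hdvd))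
    have hp15 : p ∣ 15 := hp.dvd_of_dvd_pow (n := 2) (by rw [pow_two]; exact_mod_cast h225)
    have hle := Nat.le_of_dvd (by norm_num) hp15
    interval_cases p
    · norm_num at hp15
    · norm_num at hp15
    · norm_num at hp
  have hne := gmk_ne_zero hp hN this
  rwa [show gmk pi (15 : GaussianInt) = (15 : GQuot pi) from map_ofNat _ 15] at hne

lemma neg_one_ne_one_gquot {pi : GaussianInt} {p : ℕ} (hp : p.Prime) (hmod : p % 4 = 1)
    (hN : pi.norm = p) : (-1 : GQuot pi) ≠ 1 := by
  intro h
  apply two_ne_zero_gquot hp hmod hN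
  have h2 : (2 : GQuot pi) = 1 + 1 := by norm_num
  rw [h2]
  nth_rewrite 2 [← h]
  ring

lemma orderOf_zetaU {pi : GaussianInt} {p : ℕ} (hp : p.Prime) (hmod : p % 4 = 1)
    (hN : pi.norm = p) : orderOf (zetaU pi) = 4 := by
  have hd : orderOf (zetaU pi) ∣ 4 := orderOf_dvd_of_pow_eq_one (zetaU_pow4 pi)
  have hsq : zetaU pi ^ 2 ≠ 1 := by
    rw [zetaU_sq]
    intro h
    exact neg_one_ne_one_gquot hp hmod hN (by
      have := congrArg (Units.val) h
      simpa using this)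
  have hnd : ¬ (orderOf (zetaU pi) ∣ 2) := fun h => hsq (orderOf_dvd_iff_pow_eq_one.mp h)
  set o := orderOf (zetaU pi) with ho
  have hmem : o ∈ Nat.divisors 4 := Nat.mem_divisors.mpr ⟨hd, by norm_num⟩
  have h124 : o = 1 ∨ o = 2 ∨ o = 4 := by
    rw [show Nat.divisors 4 = {1,2,4} from by decide] at hmem
    simpa using hmem
  rcases h124 with h | h | h
  · exact absurd (by rw [h]; exact one_dvd 2) hnd
  · exact absurd (by rw [h]) hnd
  · exact h

lemma mem_zpowers_zetaU {pi : GaussianInt} {u : (GQuot pi)ˣ}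
    (h : u ∈ Subgroup.zpowers (zetaU pi)) : ∃ s : ℕ, u = zetaU pi ^ s := by
  obtain ⟨m, hm⟩ := h
  have hm' : zetaU pi ^ m = u := hm
  refine ⟨(m % 4).toNat, ?_⟩
  have h0 : (0:ℤ) ≤ m % 4 := Int.emod_nonneg m (by norm_num)
  have hcast : (((m % 4).toNat : ℕ) : ℤ) = m % 4 := Int.toNat_of_nonneg h0
  have key : zetaU pi ^ m = zetaU pi ^ (m % 4) := by
    conv_lhs => rw [show m = 4 * (m / 4) + m % 4 from (Int.mul_ediv_add_emod m 4).symm]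
    rw [zpow_add, zpow_mul,
      show ((zetaU pi) ^ (4:ℤ)) = 1 from by
        rw [show (4:ℤ) = ((4:ℕ):ℤ) from rfl, zpow_natCast, zetaU_pow4],
      one_zpow, one_mul]
  rw [← hm', key, ← hcast, zpow_natCast, Int.toNat_natCast]

lemma card_coset_quot {pi : GaussianInt} {p : ℕ} (hp : p.Prime) (hmod : p % 4 = 1)
    (hN : pi.norm = p) :
    Nat.card ((GQuot pi)ˣ ⧸ Subgroup.zpowers (zetaU pi)) = (p - 1) / 4 := by
  haveI : Finite (GQuot pi) := finite_gquot hp hmod hN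
  have hcard := Subgroup.card_eq_card_quotient_mul_card_subgroup
    (Subgroup.zpowers (zetaU pi))
  rw [card_units_gquot hp hmod hN, Nat.card_zpowers, orderOf_zetaU hp hmod hN] at hcard
  have h5 := p_ge_5 hp hmod
  omega

lemma mWt_le_p {pi : GaussianInt} {p : ℕ} (hp : p.Prime) (hN : pi.norm = p)
    (α : GQuot pi) : mWt pi α ≤ p := by
  obtain ⟨z, hz⟩ := gmk_surj pi α
  have hpne : pi ≠ 0 := pi_ne_zero hp hN
  set r := z % pi with hr
  have hzr : gmk pi r = α := by
    rw [← hz, hr, EuclideanDomain.mod_eq_sub_mul_div, map_sub, map_mul]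
    have : gmk pi pi = 0 := (gmk_eq_zero_iff pi pi).mpr dvd_rfl
    rw [this, zero_mul, sub_zero]
  have hle := mWt_le hzr
  have hnorm : r.norm.natAbs < p := by
    have h1 : r.norm < pi.norm := GaussianInt.norm_mod_lt z hpne
    have h2 : 0 ≤ r.norm := GaussianInt.norm_nonneg r
    omega
  have hsq : ∀ x : ℕ, x ≤ x * x := by
    intro x
    match x with
    | 0 => exact le_refl 0
    | Nat.succ y => exact Nat.le_mul_of_pos_left _ (Nat.succ_pos y)
  have hwt : r.re.natAbs + r.im.natAbs ≤ r.norm.natAbs := by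
    rw [GaussianInt.natAbs_norm_eq]
    have := hsq r.re.natAbs
    have := hsq r.im.natAbs
    omega
  omega

lemma le_dPiCode {pi : GaussianInt} {n : ℕ} {m : ℕ}
    (C : Submodule (GQuot pi) (Fin n → GQuot pi))
    (hne : ∃ c ∈ C, c ≠ 0)
    (h : ∀ c ∈ C, c ≠ 0 → m ≤ mWtVec pi c) : m ≤ dPiCode pi C := by
  obtain ⟨c0, hc0, hc0'⟩ := hne
  have hSne : {w : ℕ | ∃ c ∈ C, c ≠ 0 ∧ mWtVec pi c = w}.Nonempty :=
    ⟨mWtVec pi c0, c0, hc0, hc0', rfl⟩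
  obtain ⟨c, hc, hcne, hcw⟩ := Nat.sInf_mem hSne
  rw [dPiCode, ← hcw]
  exact h c hc hcne

lemma dPiCode_le {pi : GaussianInt} {n : ℕ}
    {C : Submodule (GQuot pi) (Fin n → GQuot pi)}
    {c : Fin n → GQuot pi} (hc : c ∈ C) (hcne : c ≠ 0) :
    dPiCode pi C ≤ mWtVec pi c :=
  Nat.sInf_le ⟨c, hc, hcne, rfl⟩

lemma exists_ne_zero_of_finrank {pi : GaussianInt} {p : ℕ} (hp : p.Prime)
    (hN : pi.norm = p) {n : ℕ}
    (C : Submodule (GQuot pi) (Fin n → GQuot pi)) (hC : 0 < Module.finrank (GQuot pi) C) :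
    ∃ c ∈ C, c ≠ 0 := by
  letI : Field (GQuot pi) := gfield hp hN
  refine Submodule.exists_mem_ne_zero_of_ne_bot fun h => ?_
  rw [h, finrank_bot] at hC
  exact Nat.lt_irrefl 0 hC

lemma val_zetaU_sq (pi : GaussianInt) : ((zetaU pi ^ 2 : (GQuot pi)ˣ) : GQuot pi) = -1 := by
  rw [zetaU_sq]; simp

lemma mWt_unit_pow {pi : GaussianInt} {p : ℕ} (hp : p.Prime) (hN : pi.norm = p) (s : ℕ) :
    mWt pi ((zetaU pi ^ s : (GQuot pi)ˣ) : GQuot pi) = 1 := (wt1_iff hp hN).mpr ⟨s, rfl⟩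

lemma mWt_one {pi : GaussianInt} {p : ℕ} (hp : p.Prime) (hN : pi.norm = p) :
    mWt pi (1 : GQuot pi) = 1 := by
  have := mWt_unit_pow hp hN 0; simpa using this

set_option synthInstance.maxHeartbeats 1000000 in
lemma codeword_analysis {pi : GaussianInt} {p : ℕ} (hp : p.Prime)
    (hN : pi.norm = p) {n : ℕ} (w : Fin n → (GQuot pi)ˣ) {c : Fin n → GQuot pi}
    (hker : ∑ j, c j * (w j : GQuot pi) = 0) (hcne : c ≠ 0) :
    2 ≤ mWtVec pi c ∧
      (mWtVec pi c = 2 → ∃ j k : Fin n, j ≠ k ∧ ∃ s : ℕ,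
        w j = w k * zetaU pi ^ s) := by
  letI : Field (GQuot pi) := gfield hp hN
  classical
  set T : Finset (Fin n) := Finset.univ.filter (fun i => c i ≠ 0) with hT
  have hmemT : ∀ i, i ∈ T ↔ c i ≠ 0 := by intro i; simp [hT]
  have hTne : T.Nonempty := by
    obtain ⟨i, hi⟩ := Function.ne_iff.mp hcne
    exact ⟨i, (hmemT i).mpr (by simpa using hi)⟩
  have hsum0 : ∑ j ∈ T, c j * (w j : GQuot pi) = 0 := by
    rw [← hker]
    exact Finset.sum_subset (Finset.subset_univ T)
      (fun i _ hi => by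
        have : c i = 0 := by
          by_contra hci
          exact hi ((hmemT i).mpr hci)
        rw [this, zero_mul])
  have hcardle : T.card ≤ mWtVec pi c := by
    calc T.card = ∑ _i ∈ T, 1 := by simp
    _ ≤ ∑ i ∈ T, mWt pi (c i) := Finset.sum_le_sum (fun i hi => one_le_mWt ((hmemT i).mp hi))
    _ ≤ ∑ i, mWt pi (c i) := Finset.sum_le_sum_of_subset (Finset.subset_univ T)
    _ = mWtVec pi c := rfl
  have hcard1 : T.card ≠ 1 := by
    intro h1
    obtain ⟨j, hj⟩ := Finset.card_eq_one.mp h1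
    rw [hj, Finset.sum_singleton] at hsum0
    have hcj : c j ≠ 0 := (hmemT j).mp (by rw [hj]; exact Finset.mem_singleton_self j)
    exact (Units.ne_zero (w j)) ((mul_eq_zero.mp hsum0).resolve_left hcj)
  have hpos := Finset.Nonempty.card_pos hTne
  refine ⟨by omega, ?_⟩
  intro h2
  have hc2 : T.card = 2 := by omega
  obtain ⟨j, k, hjk, hTeq⟩ := Finset.card_eq_two.mp hc2
  have hcj : c j ≠ 0 := (hmemT j).mp (by rw [hTeq]; simp)
  have hck : c k ≠ 0 := (hmemT k).mp (by rw [hTeq]; simp)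
  have hwj : 1 ≤ mWt pi (c j) := one_le_mWt hcj
  have hwk : 1 ≤ mWt pi (c k) := one_le_mWt hck
  have hsumT : mWt pi (c j) + mWt pi (c k) ≤ 2 := by
    have hle2 : ∑ i ∈ T, mWt pi (c i) ≤ 2 := by
      calc ∑ i ∈ T, mWt pi (c i) ≤ ∑ i, mWt pi (c i) :=
          Finset.sum_le_sum_of_subset (Finset.subset_univ T)
      _ = 2 := h2
    rwa [hTeq, Finset.sum_pair hjk] at hle2
  obtain ⟨s, hs⟩ := (wt1_iff hp hN).mp (by omega : mWt pi (c j) = 1)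
  obtain ⟨r, hr⟩ := (wt1_iff hp hN).mp (by omega : mWt pi (c k) = 1)
  rw [hTeq, Finset.sum_pair hjk, hs, hr] at hsum0
  push_cast at hsum0
  have hvz2 : ((zetaU pi : (GQuot pi)ˣ) : GQuot pi) ^ 2 = -1 := by
    have := val_zetaU_sq pi
    push_cast at this
    exact this
  have hval : ((w j * zetaU pi ^ s : (GQuot pi)ˣ) : GQuot pi)
      = ((w k * zetaU pi ^ (r + 2) : (GQuot pi)ˣ) : GQuot pi) := by
    push_cast
    rw [pow_add]
    linear_combination hsum0 - ((w k : GQuot pi) * ((zetaU pi : (GQuot pi)ˣ) : GQuot pi) ^ r) * hvz2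
  have huu : w j * zetaU pi ^ s = w k * zetaU pi ^ (r + 2) := Units.ext hval
  refine ⟨j, k, hjk, r + 2 + 3*s, ?_⟩
  have hz4 : zetaU pi ^ (4*s) = 1 := by rw [pow_mul, zetaU_pow4, one_pow]
  calc w j = w j * (zetaU pi ^ s * zetaU pi ^ (3*s)) := by
        rw [← pow_add, show s + 3*s = 4*s from by ring, hz4, mul_one]
  _ = (w j * zetaU pi ^ s) * zetaU pi ^ (3*s) := by rw [mul_assoc]
  _ = (w k * zetaU pi ^ (r+2)) * zetaU pi ^ (3*s) := by rw [huu]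
  _ = w k * zetaU pi ^ (r + 2 + 3*s) := by rw [mul_assoc, ← pow_add]

set_option synthInstance.maxHeartbeats 1000000 in
lemma dPiCode_le_one_zero_coord {pi : GaussianInt} {p : ℕ} (hp : p.Prime)
    (hN : pi.norm = p) {n : ℕ} (w : Fin n → GQuot pi) {j : Fin n} (hj : w j = 0) :
    dPiCode pi (LinearMap.ker (dotL w)) ≤ 1 := by
  letI : Field (GQuot pi) := gfield hp hN
  have hmem : (Pi.single j (1 : GQuot pi) : Fin n → GQuot pi) ∈ LinearMap.ker (dotL w) := by
    rw [LinearMap.mem_ker, dotL_single, hj, mul_zero]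
  have hne0 : (Pi.single j (1 : GQuot pi) : Fin n → GQuot pi) ≠ 0 := by
    intro h
    have := congrFun h j
    rw [Pi.single_eq_same] at this
    exact one_ne_zero this
  have hle := dPiCode_le hmem hne0
  rwa [mWtVec_single, mWt_one hp hN] at hle

set_option synthInstance.maxHeartbeats 1000000 in
lemma dPiCode_le_two_same_coset {pi : GaussianInt} {p : ℕ} (hp : p.Prime)
    (hN : pi.norm = p) {n : ℕ} (w : Fin n → (GQuot pi)ˣ)
    {j k : Fin n} (hjk : j ≠ k) {s : ℕ} (h : w j = w k * zetaU pi ^ s) :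
    dPiCode pi (LinearMap.ker (dotL (fun i => (w i : GQuot pi)))) ≤ 2 := by
  letI : Field (GQuot pi) := gfield hp hN
  have hvz2 : ((zetaU pi : (GQuot pi)ˣ) : GQuot pi) ^ 2 = -1 := by
    have := val_zetaU_sq pi; push_cast at this; exact this
  have hv : (w j : GQuot pi) = (w k : GQuot pi) * ((zetaU pi : (GQuot pi)ˣ) : GQuot pi) ^ s := by
    have := congrArg (Units.val) h; push_cast at this; exact this
  set c : Fin n → GQuot pi :=
    Pi.single j (1 : GQuot pi) + Pi.single k ((zetaU pi ^ (s+2) : (GQuot pi)ˣ) : GQuot pi)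
    with hc
  have hmem : c ∈ LinearMap.ker (dotL (fun i => (w i : GQuot pi))) := by
    rw [LinearMap.mem_ker, hc, map_add, dotL_single, dotL_single]
    push_cast
    rw [one_mul]
    linear_combination hv + (((zetaU pi : (GQuot pi)ˣ) : GQuot pi) ^ s * (w k : GQuot pi)) * hvz2
  have hne0 : c ≠ 0 := by
    intro h0
    have := congrFun h0 j
    rw [hc] at this
    simp only [Pi.add_apply, Pi.single_eq_same, Pi.zero_apply] at this
    rw [Pi.single_eq_of_ne hjk, add_zero] at this
    exact one_ne_zero this
  have hle := dPiCode_le hmem hne0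
  rwa [hc, mWtVec_pair pi hjk, mWt_one hp hN, mWt_unit_pow hp hN] at hle

lemma mWt_neg_two {pi : GaussianInt} {p : ℕ} (hp : p.Prime) (hmod : p % 4 = 1)
    (hN : pi.norm = p) (hp13 : 13 ≤ p) : mWt pi (-2 : GQuot pi) = 2 := by
  letI : Field (GQuot pi) := gfield hp hN
  have hle : mWt pi (-2 : GQuot pi) ≤ 2 := by
    have hrep : gmk pi ⟨-2, 0⟩ = (-2 : GQuot pi) := by
      rw [show (⟨-2,0⟩ : GaussianInt) = -2 from by ext <;> simp, map_neg, map_ofNat]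
    have := mWt_le hrep
    simpa using this
  have hne : (-2 : GQuot pi) ≠ 0 := by
    intro h
    exact two_ne_zero_gquot hp hmod hN (by linear_combination -h)
  have h1 := one_le_mWt hne
  rcases Nat.lt_or_ge (mWt pi (-2 : GQuot pi)) 2 with h | h
  · exfalso
    have heq1 : mWt pi (-2 : GQuot pi) = 1 := by omega
    obtain ⟨t, ht⟩ := (wt1_iff hp hN).mp heq1
    have h4 : ((-2 : GQuot pi)) ^ 4 = 1 := by
      rw [ht, ← Units.val_pow_eq_pow_val, ← pow_mul, mul_comm, pow_mul, zetaU_pow4, one_pow,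
        Units.val_one]
    have h16 : (16 : GQuot pi) = 1 := by linear_combination h4
    exact fifteen_ne_zero_gquot hp hmod hN hp13 (by linear_combination h16)
  · omega

set_option synthInstance.maxHeartbeats 1000000 in
lemma dPiCode_le_three_two_coset {pi : GaussianInt} {p : ℕ} (hp : p.Prime)
    (hmod : p % 4 = 1) (hN : pi.norm = p) (hp13 : 13 ≤ p) {n : ℕ}
    (w : Fin n → (GQuot pi)ˣ) {j k : Fin n} (hjk : j ≠ k) {s : ℕ}
    (h : (2 : GQuot pi) * (w j : GQuot pi)
      = (w k : GQuot pi) * ((zetaU pi ^ s : (GQuot pi)ˣ) : GQuot pi)) :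
    dPiCode pi (LinearMap.ker (dotL (fun i => (w i : GQuot pi)))) ≤ 3 := by
  letI : Field (GQuot pi) := gfield hp hN
  set c : Fin n → GQuot pi :=
    Pi.single j (-2 : GQuot pi) + Pi.single k ((zetaU pi ^ s : (GQuot pi)ˣ) : GQuot pi)
    with hc
  have hmem : c ∈ LinearMap.ker (dotL (fun i => (w i : GQuot pi))) := by
    rw [LinearMap.mem_ker, hc, map_add, dotL_single, dotL_single]
    linear_combination -h
  have hne0 : c ≠ 0 := by
    intro h0
    have := congrFun h0 j
    rw [hc] at this
    simp only [Pi.add_apply, Pi.single_eq_same, Pi.zero_apply] at this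
    rw [Pi.single_eq_of_ne hjk, add_zero] at this
    exact two_ne_zero_gquot hp hmod hN (by linear_combination -this)
  have hle := dPiCode_le hmem hne0
  rwa [hc, mWtVec_pair pi hjk, mWt_neg_two hp hmod hN hp13, mWt_unit_pow hp hN] at hle

lemma exists_gen {pi : GaussianInt} {p : ℕ} (hp : p.Prime) (hmod : p % 4 = 1)
    (hN : pi.norm = p) :
    ∃ g : (GQuot pi)ˣ, orderOf g = p - 1 ∧ ∀ x : (GQuot pi)ˣ, x ∈ Subgroup.zpowers g := by
  letI : Field (GQuot pi) := gfield hp hN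
  haveI : Finite (GQuot pi) := finite_gquot hp hmod hN
  haveI : Fintype (GQuot pi) := Fintype.ofFinite _
  obtain ⟨g, hg⟩ := IsCyclic.exists_generator (α := (GQuot pi)ˣ)
  refine ⟨g, ?_, hg⟩
  have := orderOf_eq_card_of_forall_mem_zpowers hg
  rw [this, card_units_gquot hp hmod hN]

lemma pow_coset_distinct {pi : GaussianInt} {p : ℕ} (hp : p.Prime) (hmod : p % 4 = 1)
    (hN : pi.norm = p) {g : (GQuot pi)ˣ} (hord : orderOf g = p - 1) {n : ℕ}
    (h4n : 4 * n ≤ p - 1) :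
    ∀ j k : Fin n, j ≠ k → ∀ s : ℕ, g ^ (j : ℕ) ≠ g ^ (k : ℕ) * zetaU pi ^ s := by
  intro j k hjk s heq
  have hz1 : (zetaU pi ^ s) ^ 4 = 1 := by
    rw [← pow_mul, mul_comm, pow_mul, zetaU_pow4, one_pow]
  have h4 : (g ^ (j:ℕ)) ^ 4 = (g ^ (k:ℕ)) ^ 4 := by
    rw [heq, mul_pow, hz1, mul_one]
  have hzpow : g ^ (((j:ℕ) * 4 : ℤ) - ((k:ℕ) * 4 : ℤ)) = 1 := by
    rw [zpow_sub, show (((j:ℕ) * 4 : ℤ)) = (((j:ℕ) * 4 : ℕ) : ℤ) from by push_cast; ring,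
      show (((k:ℕ) * 4 : ℤ)) = (((k:ℕ) * 4 : ℕ) : ℤ) from by push_cast; ring,
      zpow_natCast, zpow_natCast, pow_mul, pow_mul, h4]
    exact mul_inv_cancel _
  have hdvd : ((orderOf g : ℤ)) ∣ (((j:ℕ) * 4 : ℤ) - ((k:ℕ) * 4 : ℤ)) :=
    orderOf_dvd_iff_zpow_eq_one.mpr hzpow
  rw [hord] at hdvd
  have hdvd' : (p - 1) ∣ (((j:ℕ) * 4 : ℤ) - ((k:ℕ) * 4 : ℤ)).natAbs := by
    have := Int.natAbs_dvd_natAbs.mpr hdvd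
    simpa using this
  have hj := j.isLt
  have hk := k.isLt
  have hjkne : (j:ℕ) ≠ (k:ℕ) := fun h => hjk (Fin.ext h)
  have hlt : (((j:ℕ) * 4 : ℤ) - ((k:ℕ) * 4 : ℤ)).natAbs < p - 1 := by omega
  have hne0 : (((j:ℕ) * 4 : ℤ) - ((k:ℕ) * 4 : ℤ)).natAbs ≠ 0 := by omega
  exact hne0 (Nat.eq_zero_of_dvd_of_lt hdvd' hlt)

lemma two_pow_ne {pi : GaussianInt} {p : ℕ} (hp : p.Prime) (hmod : p % 4 = 1)
    (hN : pi.norm = p) (hp13 : 13 ≤ p) (s : ℕ) :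
    (2 : GQuot pi) ≠ ((zetaU pi ^ s : (GQuot pi)ˣ) : GQuot pi) := by
  intro h
  have h4 : ((2 : GQuot pi)) ^ 4 = 1 := by
    rw [h, ← Units.val_pow_eq_pow_val, ← pow_mul, mul_comm, pow_mul, zetaU_pow4, one_pow,
      Units.val_one]
  have h16 : (16 : GQuot pi) = 1 := by linear_combination h4
  exact fifteen_ne_zero_gquot hp hmod hN hp13 (by linear_combination h16)

set_option synthInstance.maxHeartbeats 1000000 in
lemma exists_two_coset {pi : GaussianInt} {p : ℕ} (hp : p.Prime) (hmod : p % 4 = 1)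
    (hN : pi.norm = p) (hp13 : 13 ≤ p) {n : ℕ} (hn : 2 ≤ n) (heq : 4 * n = p - 1)
    (w : Fin n → (GQuot pi)ˣ)
    (hdist : ∀ j k : Fin n, j ≠ k → ∀ s : ℕ, w j ≠ w k * zetaU pi ^ s) :
    ∃ j k : Fin n, j ≠ k ∧ ∃ s : ℕ,
      (2 : GQuot pi) * (w j : GQuot pi)
        = (w k : GQuot pi) * ((zetaU pi ^ s : (GQuot pi)ˣ) : GQuot pi) := by
  letI : Field (GQuot pi) := gfield hp hN
  haveI : Finite (GQuot pi) := finite_gquot hp hmod hN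
  set H := Subgroup.zpowers (zetaU pi) with hH
  set f : Fin n → (GQuot pi)ˣ ⧸ H := fun j => QuotientGroup.mk (w j) with hf
  have hinj : Function.Injective f := by
    intro j k hfjk
    by_contra hjk
    have hmem : (w j)⁻¹ * w k ∈ H := QuotientGroup.eq.mp hfjk
    obtain ⟨s, hs⟩ := mem_zpowers_zetaU hmem
    exact hdist k j (fun h => hjk (Fin.ext (congrArg Fin.val h)).symm) s
      (by rw [← hs]; group)
  haveI : Fintype ((GQuot pi)ˣ ⧸ H) := Fintype.ofFinite _
  have hcardQ : Fintype.card ((GQuot pi)ˣ ⧸ H) = n := by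
    rw [← Nat.card_eq_fintype_card, hH, card_coset_quot hp hmod hN]
    omega
  have hbij : Function.Bijective f :=
    (Fintype.bijective_iff_injective_and_card f).mpr ⟨hinj, by rw [hcardQ, Fintype.card_fin]⟩
  set u2 : (GQuot pi)ˣ := Units.mk0 (2 : GQuot pi) (two_ne_zero_gquot hp hmod hN) with hu2
  set j0 : Fin n := ⟨0, by omega⟩ with hj0
  obtain ⟨k, hk⟩ := hbij.2 (QuotientGroup.mk (u2 * w j0))
  have hmem : (w k)⁻¹ * (u2 * w j0) ∈ H := QuotientGroup.eq.mp hk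
  obtain ⟨s, hs⟩ := mem_zpowers_zetaU hmem
  have hrel : u2 * w j0 = w k * zetaU pi ^ s := by rw [← hs]; group
  have hkj0 : k ≠ j0 := by
    intro hkeq
    rw [hkeq] at hrel
    have hcanc : u2 * w j0 = zetaU pi ^ s * w j0 := by rw [hrel, mul_comm]
    have hu2eq : u2 = zetaU pi ^ s := mul_right_cancel hcanc
    exact two_pow_ne hp hmod hN hp13 s (by rw [← hu2eq]; rfl)
  refine ⟨j0, k, fun h => hkj0 h.symm, s, ?_⟩
  have := congrArg Units.val hrel
  push_cast at this
  rw [show ((u2 : (GQuot pi)ˣ) : GQuot pi) = (2 : GQuot pi) from rfl] at this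
  push_cast
  exact this

lemma p13_of_9 {p : ℕ} (hp : p.Prime) (hmod : p % 4 = 1) (h9 : 9 ≤ p) : 13 ≤ p := by
  have h9' : p ≠ 9 := by rintro rfl; norm_num at hp
  omega

set_option synthInstance.maxHeartbeats 1000000 in
lemma three_le_dPiCode {pi : GaussianInt} {p : ℕ} (hp : p.Prime) (hmod : p % 4 = 1)
    (hN : pi.norm = p) {n : ℕ} (hn : 2 ≤ n) (w : Fin n → (GQuot pi)ˣ)
    (hdist : ∀ j k : Fin n, j ≠ k → ∀ s : ℕ, w j ≠ w k * zetaU pi ^ s) :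
    3 ≤ dPiCode pi (LinearMap.ker (dotL (fun i => (w i : GQuot pi)))) := by
  letI : Field (GQuot pi) := gfield hp hN
  have hfr : Module.finrank (GQuot pi)
      (LinearMap.ker (dotL (fun i => (w i : GQuot pi)))) = n - 1 :=
    finrank_ker_dotL _ (j0 := ⟨0, by omega⟩) (Units.ne_zero _)
  apply le_dPiCode _ (exists_ne_zero_of_finrank hp hN _ (by rw [hfr]; omega))
  intro c hc hcne
  have hker : ∑ j, c j * (w j : GQuot pi) = 0 := by
    have := LinearMap.mem_ker.mp hc
    rwa [dotL_apply] at this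
  obtain ⟨h2, hcase⟩ := codeword_analysis hp hN w hker hcne
  by_contra hlt
  obtain ⟨j, k, hjk, s, hs⟩ := hcase (by omega)
  exact hdist j k hjk s hs

set_option synthInstance.maxHeartbeats 1000000 in
lemma exists_code_ge3 {pi : GaussianInt} {p : ℕ} (hp : p.Prime) (hmod : p % 4 = 1)
    (hN : pi.norm = p) {n : ℕ} (hn : 2 ≤ n) (h4n : 4 * n ≤ p - 1) :
    ∃ C : Submodule (GQuot pi) (Fin n → GQuot pi),
      Module.finrank (GQuot pi) C = n - 1 ∧ 3 ≤ dPiCode pi C ∧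
      (4 * n = p - 1 → dPiCode pi C = 3) := by
  letI : Field (GQuot pi) := gfield hp hN
  obtain ⟨g, hord, hgen⟩ := exists_gen hp hmod hN
  set w : Fin n → (GQuot pi)ˣ := fun j => g ^ (j : ℕ) with hw
  have hdist : ∀ j k : Fin n, j ≠ k → ∀ s : ℕ, w j ≠ w k * zetaU pi ^ s :=
    pow_coset_distinct hp hmod hN hord h4n
  refine ⟨LinearMap.ker (dotL (fun i => (w i : GQuot pi))), ?_, ?_, ?_⟩
  · exact finrank_ker_dotL _ (j0 := ⟨0, by omega⟩) (Units.ne_zero _)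
  · exact three_le_dPiCode hp hmod hN hn w hdist
  · intro heq
    have hp13 : 13 ≤ p := p13_of_9 hp hmod (by omega)
    obtain ⟨j, k, hjk, s, hs⟩ := exists_two_coset hp hmod hN hp13 hn heq w hdist
    have hle := dPiCode_le_three_two_coset hp hmod hN hp13 w hjk hs
    have hge := three_le_dPiCode hp hmod hN hn w hdist
    omega

set_option synthInstance.maxHeartbeats 1000000 in
lemma dPiCode_le_two_all {pi : GaussianInt} {p : ℕ} (hp : p.Prime) (hmod : p % 4 = 1)
    (hN : pi.norm = p) {n : ℕ} (hn : 2 ≤ n) (hgt : p - 1 < 4 * n)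
    (C : Submodule (GQuot pi) (Fin n → GQuot pi))
    (hC : Module.finrank (GQuot pi) C = n - 1) : dPiCode pi C ≤ 2 := by
  letI : Field (GQuot pi) := gfield hp hN
  haveI : Finite (GQuot pi) := finite_gquot hp hmod hN
  obtain ⟨w, rfl⟩ := code_eq_ker (by omega) C hC
  by_cases hz : ∃ j, w j = 0
  · obtain ⟨j, hj⟩ := hz
    exact (dPiCode_le_one_zero_coord hp hN w hj).trans (by norm_num)
  · push_neg at hz
    set u : Fin n → (GQuot pi)ˣ := fun j => Units.mk0 (w j) (hz j) with hu
    have hwu : w = fun i => (u i : GQuot pi) := by funext i; rfl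
    set H := Subgroup.zpowers (zetaU pi) with hH
    haveI : Fintype ((GQuot pi)ˣ ⧸ H) := Fintype.ofFinite _
    have hcard : Fintype.card ((GQuot pi)ˣ ⧸ H) < Fintype.card (Fin n) := by
      rw [Fintype.card_fin, ← Nat.card_eq_fintype_card, hH, card_coset_quot hp hmod hN]
      omega
    obtain ⟨j, k, hjk, hfeq⟩ := Fintype.exists_ne_map_eq_of_card_lt
      (fun j => (QuotientGroup.mk (u j) : (GQuot pi)ˣ ⧸ H)) hcard
    have hmem : (u j)⁻¹ * u k ∈ H := QuotientGroup.eq.mp hfeq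
    obtain ⟨s, hs⟩ := mem_zpowers_zetaU hmem
    have hrel : u k = u j * zetaU pi ^ s := by rw [← hs]; group
    rw [hwu]
    exact dPiCode_le_two_same_coset hp hN u (Ne.symm hjk) hrel

set_option synthInstance.maxHeartbeats 1000000 in
lemma dPiCode_le_three_all {pi : GaussianInt} {p : ℕ} (hp : p.Prime) (hmod : p % 4 = 1)
    (hN : pi.norm = p) {n : ℕ} (hn : 2 ≤ n) (heq : 4 * n = p - 1)
    (C : Submodule (GQuot pi) (Fin n → GQuot pi))
    (hC : Module.finrank (GQuot pi) C = n - 1) : dPiCode pi C ≤ 3 := by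
  letI : Field (GQuot pi) := gfield hp hN
  haveI : Finite (GQuot pi) := finite_gquot hp hmod hN
  have hp13 : 13 ≤ p := p13_of_9 hp hmod (by omega)
  obtain ⟨w, rfl⟩ := code_eq_ker (by omega) C hC
  by_cases hz : ∃ j, w j = 0
  · obtain ⟨j, hj⟩ := hz
    exact (dPiCode_le_one_zero_coord hp hN w hj).trans (by norm_num)
  · push_neg at hz
    set u : Fin n → (GQuot pi)ˣ := fun j => Units.mk0 (w j) (hz j) with hu
    have hwu : w = fun i => (u i : GQuot pi) := by funext i; rfl
    by_cases hdist : ∀ j k : Fin n, j ≠ k → ∀ s : ℕ, u j ≠ u k * zetaU pi ^ s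
    · obtain ⟨j, k, hjk, s, hs⟩ := exists_two_coset hp hmod hN hp13 hn heq u hdist
      rw [hwu]
      exact dPiCode_le_three_two_coset hp hmod hN hp13 u hjk hs
    · push_neg at hdist
      obtain ⟨j, k, hjk, s, hs⟩ := hdist
      rw [hwu]
      exact (dPiCode_le_two_same_coset hp hN u hjk hs).trans (by norm_num)

set_option synthInstance.maxHeartbeats 1000000 in
lemma exists_code_eq2 {pi : GaussianInt} {p : ℕ} (hp : p.Prime) (hmod : p % 4 = 1)
    (hN : pi.norm = p) {n : ℕ} (hn : 2 ≤ n) :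
    ∃ C : Submodule (GQuot pi) (Fin n → GQuot pi),
      Module.finrank (GQuot pi) C = n - 1 ∧ dPiCode pi C = 2 := by
  letI : Field (GQuot pi) := gfield hp hN
  set w : Fin n → (GQuot pi)ˣ := fun _ => 1 with hw
  refine ⟨LinearMap.ker (dotL (fun i => (w i : GQuot pi))), ?_, ?_⟩
  · exact finrank_ker_dotL _ (j0 := ⟨0, by omega⟩) (Units.ne_zero _)
  · have hle : dPiCode pi (LinearMap.ker (dotL (fun i => (w i : GQuot pi)))) ≤ 2 := by
      refine dPiCode_le_two_same_coset hp hN w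
        (j := ⟨0, by omega⟩) (k := ⟨1, by omega⟩) (by intro h; simp [Fin.ext_iff] at h)
        (s := 0) (by rw [pow_zero, mul_one])
    have hfr : Module.finrank (GQuot pi)
        (LinearMap.ker (dotL (fun i => (w i : GQuot pi)))) = n - 1 :=
      finrank_ker_dotL _ (j0 := ⟨0, by omega⟩) (Units.ne_zero _)
    have hge : 2 ≤ dPiCode pi (LinearMap.ker (dotL (fun i => (w i : GQuot pi)))) := by
      apply le_dPiCode _ (exists_ne_zero_of_finrank hp hN _ (by rw [hfr]; omega))
      intro c hc hcne
      have hker : ∑ j, c j * (w j : GQuot pi) = 0 := by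
        have := LinearMap.mem_ker.mp hc
        rwa [dotL_apply] at this
      exact (codeword_analysis hp hN w hker hcne).1
    omega

lemma mWtVec_le_np {pi : GaussianInt} {p : ℕ} (hp : p.Prime) (hN : pi.norm = p)
    {n : ℕ} (c : Fin n → GQuot pi) : mWtVec pi c ≤ n * p := by
  calc mWtVec pi c = ∑ i, mWt pi (c i) := rfl
  _ ≤ ∑ _i : Fin n, p := Finset.sum_le_sum (fun i _ => mWt_le_p hp hN _)
  _ = n * p := by simp [Finset.sum_const, mul_comm]

lemma dPiCode_le_np {pi : GaussianInt} {p : ℕ} (hp : p.Prime) (hN : pi.norm = p)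
    {n : ℕ} (hn : 2 ≤ n) (C : Submodule (GQuot pi) (Fin n → GQuot pi))
    (hC : Module.finrank (GQuot pi) C = n - 1) : dPiCode pi C ≤ n * p := by
  obtain ⟨c, hc, hcne⟩ := exists_ne_zero_of_finrank hp hN C (by omega)
  exact (dPiCode_le hc hcne).trans (mWtVec_le_np hp hN c)

end AUX

/-- `d_π(n, n-1)` equals `2` if `n > (p-1)/4`, equals `3` if `n = (p-1)/4`,
and is at least `3` if `n < (p-1)/4`. -/
theorem stmt11 (a b : ℕ) (ha : 0 < a) (hab : a < b) (hgcd : Nat.gcd a b = 1)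
    (hp : Nat.Prime (a ^ 2 + b ^ 2)) (hmod : (a ^ 2 + b ^ 2) % 4 = 1)
    (pi : GaussianInt) (hpi : pi = (⟨(a : ℤ), (b : ℤ)⟩ : GaussianInt))
    (n : ℕ) (hn : 2 ≤ n) :
    (n > (a ^ 2 + b ^ 2 - 1) / 4 → dPiMax pi n (n - 1) = 2) ∧
    (n = (a ^ 2 + b ^ 2 - 1) / 4 → dPiMax pi n (n - 1) = 3) ∧
    (n < (a ^ 2 + b ^ 2 - 1) / 4 → 3 ≤ dPiMax pi n (n - 1)) := by
  have hN : pi.norm = ((a ^ 2 + b ^ 2 : ℕ) : ℤ) := by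
    rw [hpi, Zsqrtd.norm]; push_cast; ring
  set p : ℕ := a ^ 2 + b ^ 2 with hpdef
  have hBdd : BddAbove {d : ℕ | ∃ C : Submodule (GQuot pi) (Fin n → GQuot pi),
      Module.finrank (GQuot pi) C = n - 1 ∧ dPiCode pi C = d} := by
    refine ⟨n * p, fun d hd => ?_⟩
    obtain ⟨C, hC, rfl⟩ := hd
    exact dPiCode_le_np hp hN hn C hC
  refine ⟨?_, ?_, ?_⟩
  · intro hgt
    have hgt' : p - 1 < 4 * n := by omega
    obtain ⟨C2, hC2, hd2⟩ := exists_code_eq2 hp hmod hN hn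
    apply le_antisymm
    · refine csSup_le ⟨2, C2, hC2, hd2⟩ ?_
      rintro d ⟨C, hC, rfl⟩
      exact dPiCode_le_two_all hp hmod hN hn hgt' C hC
    · exact le_csSup hBdd ⟨C2, hC2, hd2⟩
  · intro heqn
    have heq' : 4 * n = p - 1 := by
      have h2 := hp.two_le
      omega
    obtain ⟨C3, hC3, hge3, hcond⟩ := exists_code_ge3 hp hmod hN hn (le_of_eq heq')
    have hd3 := hcond heq'
    apply le_antisymm
    · refine csSup_le ⟨3, C3, hC3, hd3⟩ ?_
      rintro d ⟨C, hC, rfl⟩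
      exact dPiCode_le_three_all hp hmod hN hn heq' C hC
    · exact le_csSup hBdd ⟨C3, hC3, hd3⟩
  · intro hlt
    have h4n : 4 * n ≤ p - 1 := by
      have h2 := hp.two_le
      omega
    obtain ⟨C3, hC3, hge3, _⟩ := exists_code_ge3 hp hmod hN hn h4n
    exact hge3.trans (le_csSup hBdd ⟨C3, hC3, rfl⟩)
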